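/- Let k be an algebraically closed field and let A, B be finitely generated commutative k-algebras. Let f : Spec B → Spec A be a morphism of ringed spaces (a continuous map together with a morphism O_{Spec A} → f_* O_{Spec B} of sheaves of rings) such that for every open U ⊆ Spec A the component O_{Spec A}(U) → O_{Spec B}(f⁻¹(U)) is a homomorphism of k-algebras. Then f is a morphism of schemes: for every point p of Spec B the induced stalk map O_{Spec A, f(p)} → O_{Spec B, p} is a local ring homomorphism, and f coincides with the scheme morphism Spec(φ) induced by the map φ : A → B obtained from f on global sections. -/

import Mathlib

open AlgebraicGeometry CategoryTheory Opposite TopologicalSpace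

universe u

set_option maxHeartbeats 1000000 in
/-- Over an algebraically closed field `k`, any morphism of ringed spaces
`Spec B ⟶ Spec A` between spectra of finitely generated commutative `k`-algebras whose
components on sections are `k`-algebra homomorphisms is a morphism of schemes: all stalk maps
are local ring homomorphisms and the morphism is the one induced by the global sections map. -/
theorem ringedSpaceMap_is_schemeMap {k : Type u} [Field k] [IsAlgClosed k]
    (A B : Type u) [CommRing A] [CommRing B] [Algebra k A] [Algebra k B]
    [Algebra.FiniteType k A] [Algebra.FiniteType k B]
    (f : Spec.sheafedSpaceObj (CommRingCat.of B) ⟶ Spec.sheafedSpaceObj (CommRingCat.of A))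
    (hf : ∀ (U : Opens (PrimeSpectrum A)) (c : k),
      f.hom.c.app (op U) (StructureSheaf.toOpen A U (algebraMap k A c)) =
        StructureSheaf.toOpen B ((Opens.map f.hom.base).obj U) (algebraMap k B c)) :
    (∀ p, IsLocalHom (PresheafedSpace.Hom.stalkMap f.hom p).hom) ∧
      f = Spec.sheafedSpaceMap
        ((StructureSheaf.globalSectionsIso (CommRingCat.of A)).hom ≫ f.hom.c.app (op ⊤) ≫
          (StructureSheaf.globalSectionsIso (CommRingCat.of B)).inv) := by
  set φ : CommRingCat.of A ⟶ CommRingCat.of B :=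
    (StructureSheaf.globalSectionsIso (CommRingCat.of A)).hom ≫ f.hom.c.app (op ⊤) ≫
      (StructureSheaf.globalSectionsIso (CommRingCat.of B)).inv with hφ
  have e2A : StructureSheaf.toOpen A ⊤
      = (StructureSheaf.globalSectionsIso (CommRingCat.of A)).hom := rfl
  have e2B : StructureSheaf.toOpen B ((Opens.map f.hom.base).obj ⊤)
      = (StructureSheaf.globalSectionsIso (CommRingCat.of B)).hom := rfl
  -- the global-sections square, morphism level
  have Tm : StructureSheaf.toOpen A ⊤ ≫ f.hom.c.app (op ⊤)
      = φ ≫ StructureSheaf.toOpen B ((Opens.map f.hom.base).obj ⊤) := by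
    rw [e2B, hφ, e2A]
    erw [Category.assoc, Category.assoc, Iso.inv_hom_id, Category.comp_id]
    rfl
  -- the stalk square, morphism level
  have sqm : ∀ q : PrimeSpectrum B,
      StructureSheaf.toStalk A (f.hom.base q) ≫ PresheafedSpace.Hom.stalkMap f.hom q
        = φ ≫ StructureSheaf.toStalk B q := by
    intro q
    ext a
    have h1 := PresheafedSpace.stalkMap_germ_apply f.hom ⊤ q trivial (StructureSheaf.toOpen A ⊤ a)
    have h2 := ConcreteCategory.congr_hom Tm a
    exact h1.trans (congrArg (ConcreteCategory.hom ((Spec.sheafedSpaceObj (CommRingCat.of B)).presheaf.germ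
      ((Opens.map f.hom.base).obj ⊤) q trivial)) h2)
  have sq : ∀ (q : PrimeSpectrum B) (a : A),
      PresheafedSpace.Hom.stalkMap f.hom q (StructureSheaf.toStalk A (f.hom.base q) a)
        = StructureSheaf.toStalk B q (φ a) :=
    fun q a => ConcreteCategory.congr_hom (sqm q) a
  -- `φ` commutes with the `k`-algebra structure maps.
  have Lk : ∀ c : k, φ (algebraMap k A c) = algebraMap k B c := by
    intro c
    have h1 := ConcreteCategory.congr_hom Tm (algebraMap k A c)
    have h6 : StructureSheaf.toOpen B ((Opens.map f.hom.base).obj ⊤) (φ (algebraMap k A c))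
        = StructureSheaf.toOpen B ((Opens.map f.hom.base).obj ⊤) (algebraMap k B c) :=
      (h1.symm).trans (hf ⊤ c)
    rw [e2B] at h6
    exact (StructureSheaf.globalSectionsIso
      (CommRingCat.of B)).commRingCatIsoToRingEquiv.injective h6
  -- Lemma 4: `φ ⁻¹ q ⊆ f q`
  have L4 : ∀ q : PrimeSpectrum B, q.asIdeal.comap φ.hom ≤ (f.hom.base q).asIdeal := by
    intro q a ha
    by_contra h
    have hu : IsUnit (StructureSheaf.toStalk A (f.hom.base q) a) :=
      (fun (x : PrimeSpectrum A) => IsLocalization.AtPrime.isUnit_to_map_iff (R := A)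
        ((Spec.structureSheaf A).presheaf.stalk x) x.asIdeal a) (f.hom.base q) |>.mpr h
    have hu2 : IsUnit (StructureSheaf.toStalk B q (φ a)) := by
      rw [← sq q a]
      exact hu.map (PresheafedSpace.Hom.stalkMap f.hom q).hom
    exact (IsLocalization.AtPrime.isUnit_to_map_iff
      ((Spec.structureSheaf B).presheaf.stalk q) q.asIdeal (φ a)).mp hu2 ha
  -- Lemma 5: on closed points `f` is given by `φ`.
  have L5 : ∀ q : PrimeSpectrum B, q.asIdeal.IsMaximal →
      (f.hom.base q).asIdeal = q.asIdeal.comap φ.hom := by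
    intro q hq
    letI : q.asIdeal.IsMaximal := hq
    letI := Ideal.Quotient.field q.asIdeal
    letI : Algebra.FiniteType k (B ⧸ q.asIdeal) :=
      Algebra.FiniteType.of_surjective
        (Ideal.Quotient.mkₐ k q.asIdeal) (Ideal.Quotient.mkₐ_surjective k _)
    letI : Module.Finite k (B ⧸ q.asIdeal) :=
      finite_of_finite_type_of_isJacobsonRing k _
    letI : Algebra.IsIntegral k (B ⧸ q.asIdeal) := Algebra.IsIntegral.of_finite k _
    have hsurj : Function.Surjective (algebraMap k (B ⧸ q.asIdeal)) :=
      IsAlgClosed.algebraMap_bijective_of_isIntegral.2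
    set ψ : A →+* B ⧸ q.asIdeal := (Ideal.Quotient.mk q.asIdeal).comp φ.hom with hψ
    have hψs : Function.Surjective ψ := by
      intro x
      obtain ⟨c, hc⟩ := hsurj x
      refine ⟨algebraMap k A c, ?_⟩
      rw [hψ, RingHom.comp_apply, Lk c, ← hc]
      rfl
    have hker : RingHom.ker ψ = q.asIdeal.comap φ.hom := by
      rw [hψ, ← RingHom.comap_ker, Ideal.mk_ker]
    have hmax : (q.asIdeal.comap φ.hom).IsMaximal := by
      rw [← hker]
      exact RingHom.ker_isMaximal_of_surjective ψ hψs
    exact (hmax.eq_of_le (f.hom.base q).2.ne_top (L4 q)).symm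
  haveI : IsJacobsonRing B := isJacobsonRing_of_finiteType (A := k) (B := B)
  -- Lemma 6: `f` agrees with `Spec φ` on points.
  have L6 : ∀ q : PrimeSpectrum B, f.hom.base q = PrimeSpectrum.comap φ.hom q := by
    intro q
    refine PrimeSpectrum.ext (le_antisymm ?_ (L4 q))
    intro a ha
    by_contra hna
    have hphi : φ a ∉ q.asIdeal := hna
    have hjac : q.asIdeal.jacobson = q.asIdeal :=
      (‹IsJacobsonRing B›).out q.2.isRadical
    have hmem : φ a ∉ q.asIdeal.jacobson := by rw [hjac]; exact hphi
    rw [Ideal.jacobson, Ideal.mem_sInf] at hmem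
    push_neg at hmem
    obtain ⟨m, ⟨hqm, hm⟩, ham⟩ := hmem
    set Q : PrimeSpectrum B := ⟨m, hm.isPrime⟩ with hQ
    have hspec : q ⤳ Q := (PrimeSpectrum.le_iff_specializes q Q).mp hqm
    have hspec2 : f.hom.base q ⤳ f.hom.base Q := hspec.map f.hom.base.hom.continuous
    have hle : (f.hom.base q).asIdeal ≤ (f.hom.base Q).asIdeal :=
      (PrimeSpectrum.le_iff_specializes _ _).mpr hspec2
    have : a ∈ (f.hom.base Q).asIdeal := hle ha
    rw [L5 Q hm] at this
    exact ham this
  -- base maps agree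
  have w : f.hom.base = Spec.topMap φ := TopCat.ext L6
  -- stalk maps agree (after transporting along `L6`)
  have Em : ∀ q : PrimeSpectrum B,
      (Spec.structureSheaf A).presheaf.stalkSpecializes (specializes_of_eq (L6 q)) ≫
          PresheafedSpace.Hom.stalkMap f.hom q
        = PresheafedSpace.Hom.stalkMap (Spec.sheafedSpaceMap φ).hom q := by
    intro q
    apply CommRingCat.hom_ext
    apply IsLocalization.ringHom_ext (R := A)
      (S := (Spec.structureSheaf A).presheaf.stalk (PrimeSpectrum.comap φ.hom q))
      (PrimeSpectrum.comap φ.hom q).asIdeal.primeCompl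
    show CommRingCat.Hom.hom (StructureSheaf.toStalk A (PrimeSpectrum.comap φ.hom q) ≫
        ((Spec.structureSheaf A).presheaf.stalkSpecializes (specializes_of_eq (L6 q)) ≫
          PresheafedSpace.Hom.stalkMap f.hom q))
      = CommRingCat.Hom.hom (StructureSheaf.toStalk A (PrimeSpectrum.comap φ.hom q) ≫
          PresheafedSpace.Hom.stalkMap (Spec.sheafedSpaceMap φ).hom q)
    congr 1
    have hts : StructureSheaf.toStalk A (PrimeSpectrum.comap φ.hom q) ≫
        (Spec.structureSheaf A).presheaf.stalkSpecializes (specializes_of_eq (L6 q))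
        = StructureSheaf.toStalk A (f.hom.base q) :=
      StructureSheaf.toStalk_stalkSpecializes _
    refine (Category.assoc _ _ _).symm.trans ?_
    refine (congrArg (· ≫ PresheafedSpace.Hom.stalkMap f.hom q) hts).trans ?_
    refine (sqm q).trans ?_
    exact (AlgebraicGeometry.stalkMap_toStalk φ q).symm
  -- the full morphism equality
  have main : f = Spec.sheafedSpaceMap φ := by
    refine InducedCategory.hom_ext (PresheafedSpace.ext f.hom (Spec.sheafedSpaceMap φ).hom w ?_)
    apply NatTrans.ext
    funext U
    obtain ⟨U⟩ := U
    apply CommRingCat.hom_ext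
    apply RingHom.ext
    intro s
    apply TopCat.Presheaf.section_ext (Spec.structureSheaf (↑(CommRingCat.of B))) _ _ _
    intro q hq
    rw [NatTrans.comp_app, Functor.whiskerRight_app, eqToHom_app, CommRingCat.comp_apply]
    erw [TopCat.Presheaf.germ_res_apply']
    have hfq : f.hom.base q ∈ U := by
      rw [show f.hom.base q = PrimeSpectrum.comap φ.hom q from L6 q]; exact hq
    erw [← PresheafedSpace.stalkMap_germ_apply f.hom U q hfq,
      ← PresheafedSpace.stalkMap_germ_apply (Spec.sheafedSpaceMap φ).hom U q hq]
    have ME : (Spec.structureSheaf A).presheaf.germ U (PrimeSpectrum.comap φ.hom q) hq ≫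
        ((Spec.structureSheaf A).presheaf.stalkSpecializes (specializes_of_eq (L6 q)) ≫
          PresheafedSpace.Hom.stalkMap f.hom q)
        = (Spec.structureSheaf A).presheaf.germ U (f.hom.base q) hfq ≫
            PresheafedSpace.Hom.stalkMap f.hom q := by
      refine (Category.assoc _ _ _).symm.trans ?_
      congr 1
      erw [TopCat.Presheaf.germ_stalkSpecializes]
    rw [Em q] at ME
    exact (ConcreteCategory.congr_hom ME s).symm
  refine ⟨fun p => ?_, main⟩
  rw [main]
  exact (Spec.locallyRingedSpaceMap φ).prop p
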